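/- arXiv:2407.03774 — 2 statements merged into one kernel-verified Lean document; each statement's English description precedes it below -/
import Mathlib

section
/- In the bivariate Burr distribution with joint c.d.f. F(x,y) = 1 - (1 + (x/λ)^γ)^{-ψ} - (1 + (y/λ)^γ)^{-ψ} + (1 + (x/λ)^γ + (y/λ)^γ)^{-ψ} (γ, λ, ψ > 0), the conditional c.d.f. of Y given X = x is F(y|x) = 1 - (1 + (y/λ̃(x))^γ)^{-(ψ+1)}, where λ̃(x) = (λ^γ + x^γ)^{1/γ}. That is, the conditional distribution of Y given X = x is Burr with parameters (γ, λ̃(x), ψ+1). -/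
/-- Conditional c.d.f. in the bivariate Burr distribution: with Burr marginals
`F(x) = 1 - (1+(x/λ)^γ)^(-ψ)` coupled by the HRT copula with parameter `ψ`,
the conditional c.d.f. of `Y` given `X = x`, namely
`∂C(u, F(y))/∂u` at `u = F(x)`, equals `1 - (1 + (y/λ̃(x))^γ)^(-(ψ+1))`
with `λ̃(x) = (λ^γ + x^γ)^(1/γ)`; i.e. `Y | X = x` is Burr `(γ, λ̃(x), ψ+1)`. -/
theorem bivariate_burr_conditional_cdf
    (γ lam ψ : ℝ) (hγ : 0 < γ) (hlam : 0 < lam) (hψ : 0 < ψ)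
    (F : ℝ → ℝ) (hF : ∀ x, F x = 1 - (1 + (x / lam) ^ γ) ^ (-ψ))
    (C : ℝ → ℝ → ℝ)
    (hC : ∀ u v, C u v
        = u + v - 1 + ((1 - u) ^ (-1 / ψ) + (1 - v) ^ (-1 / ψ) - 1) ^ (-ψ)) :
    ∀ x > 0, ∀ y > 0,
      HasDerivAt (fun u => C u (F y))
        (1 - (1 + (y / (lam ^ γ + x ^ γ) ^ (1 / γ)) ^ γ) ^ (-(ψ + 1)))
        (F x) := by
  intro x hx y hy
  have hfun : (fun u => C u (F y))
      = fun u => u + F y - 1 + ((1 - u) ^ (-1 / ψ) + (1 - F y) ^ (-1 / ψ) - 1) ^ (-ψ) := by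
    funext u; rw [hC]
  set a : ℝ := (x / lam) ^ γ with ha_def
  set b : ℝ := (y / lam) ^ γ with hb_def
  have ha : 0 < a := Real.rpow_pos_of_pos (div_pos hx hlam) γ
  have hb : 0 < b := Real.rpow_pos_of_pos (div_pos hy hlam) γ
  have h1a : (0:ℝ) < 1 + a := by linarith
  have h1b : (0:ℝ) < 1 + b := by linarith
  have h1x : 1 - F x = (1 + a) ^ (-ψ) := by rw [hF]; ring
  have h1y : 1 - F y = (1 + b) ^ (-ψ) := by rw [hF]; ring
  have hpx : (0:ℝ) < 1 - F x := by rw [h1x]; exact Real.rpow_pos_of_pos h1a _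
  have hpy : (0:ℝ) < 1 - F y := by rw [h1y]; exact Real.rpow_pos_of_pos h1b _
  have hexp1 : -ψ * (-1 / ψ) = 1 := by field_simp
  have hexp2 : -ψ * (-1 / ψ - 1) = ψ + 1 := by field_simp; ring
  have hAx : (1 - F x) ^ (-1 / ψ) = 1 + a := by
    rw [h1x, ← Real.rpow_mul h1a.le, hexp1, Real.rpow_one]
  have hAy : (1 - F y) ^ (-1 / ψ) = 1 + b := by
    rw [h1y, ← Real.rpow_mul h1b.le, hexp1, Real.rpow_one]
  have hBx : (1 - F x) ^ (-1 / ψ - 1) = (1 + a) ^ (ψ + 1) := by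
    rw [h1x, ← Real.rpow_mul h1a.le, hexp2]
  have hA : (1 - F x) ^ (-1 / ψ) + (1 - F y) ^ (-1 / ψ) - 1 = 1 + a + b := by
    rw [hAx, hAy]; ring
  have hApos : (0:ℝ) < 1 + a + b := by linarith
  -- derivative computation
  have d1 : HasDerivAt (fun u : ℝ => 1 - u) (-1) (F x) := by
    simpa using (hasDerivAt_id (F x)).const_sub 1
  have d2 : HasDerivAt (fun u : ℝ => (1 - u) ^ (-1 / ψ))
      ((-1) * (-1 / ψ) * (1 - F x) ^ (-1 / ψ - 1)) (F x) :=
    d1.rpow_const (Or.inl hpx.ne')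
  have d3 : HasDerivAt (fun u : ℝ => (1 - u) ^ (-1 / ψ) + (1 - F y) ^ (-1 / ψ) - 1)
      ((-1) * (-1 / ψ) * (1 - F x) ^ (-1 / ψ - 1)) (F x) :=
    (d2.add_const _).sub_const 1
  have hne : (1 - F x) ^ (-1 / ψ) + (1 - F y) ^ (-1 / ψ) - 1 ≠ 0 := by
    rw [hA]; exact hApos.ne'
  have d4 : HasDerivAt
      (fun u : ℝ => ((1 - u) ^ (-1 / ψ) + (1 - F y) ^ (-1 / ψ) - 1) ^ (-ψ))
      (((-1) * (-1 / ψ) * (1 - F x) ^ (-1 / ψ - 1)) * (-ψ)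
        * ((1 - F x) ^ (-1 / ψ) + (1 - F y) ^ (-1 / ψ) - 1) ^ (-ψ - 1)) (F x) :=
    d3.rpow_const (Or.inl hne)
  have d5 : HasDerivAt (fun u : ℝ => u + F y - 1 +
      ((1 - u) ^ (-1 / ψ) + (1 - F y) ^ (-1 / ψ) - 1) ^ (-ψ))
      (1 + ((-1) * (-1 / ψ) * (1 - F x) ^ (-1 / ψ - 1)) * (-ψ)
        * ((1 - F x) ^ (-1 / ψ) + (1 - F y) ^ (-1 / ψ) - 1) ^ (-ψ - 1)) (F x) :=
    (((hasDerivAt_id (F x)).add_const (F y)).sub_const 1).add d4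
  rw [hfun]
  convert d5 using 1
  rw [hA, hBx]
  -- value equality
  set s : ℝ := lam ^ γ + x ^ γ with hs_def
  have hxg : (0:ℝ) < x ^ γ := Real.rpow_pos_of_pos hx γ
  have hyg : (0:ℝ) < y ^ γ := Real.rpow_pos_of_pos hy γ
  have hlg : (0:ℝ) < lam ^ γ := Real.rpow_pos_of_pos hlam γ
  have hs : (0:ℝ) < s := by positivity
  have hsg : ((s ^ (1/γ)) : ℝ) ^ γ = s := by
    rw [← Real.rpow_mul hs.le]
    rw [one_div_mul_cancel hγ.ne', Real.rpow_one]
  have hyt : (y / s ^ (1/γ)) ^ γ = y ^ γ / s := by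
    rw [Real.div_rpow hy.le (Real.rpow_nonneg hs.le _), hsg]
  have haa : a = x ^ γ / lam ^ γ := by
    rw [ha_def, Real.div_rpow hx.le hlam.le]
  have hbb : b = y ^ γ / lam ^ γ := by
    rw [hb_def, Real.div_rpow hy.le hlam.le]
  have h1 : 1 + a + b = (s + y ^ γ) / lam ^ γ := by
    rw [haa, hbb, hs_def]; field_simp
  have h2 : 1 + a = s / lam ^ γ := by rw [haa, hs_def]; field_simp
  have h3 : (1 : ℝ) + y ^ γ / s = (s + y ^ γ) / s := by field_simp
  rw [hyt, h1, h2, h3]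
  have hsy : (0:ℝ) < s + y ^ γ := by positivity
  have key : ((s + y ^ γ) / lam ^ γ) ^ (-ψ - 1) * (s / lam ^ γ) ^ (ψ + 1)
      = ((s + y ^ γ) / s) ^ (-(ψ + 1)) := by
    have e1 : (-ψ - 1 : ℝ) = -(ψ + 1) := by ring
    rw [e1, Real.rpow_neg (by positivity), Real.rpow_neg (by positivity)]
    have hd : ((s + y ^ γ) / s) ^ (ψ + 1)
        = ((s + y ^ γ) / lam ^ γ) ^ (ψ + 1) / (s / lam ^ γ) ^ (ψ + 1) := by
      rw [← Real.div_rpow (by positivity) (by positivity)]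
      congr 1
      rw [div_div_div_cancel_right₀]
      exact hlg.ne'
    have p1 : (0:ℝ) < ((s + y ^ γ) / lam ^ γ) ^ (ψ + 1) := by positivity
    have p2 : (0:ℝ) < (s / lam ^ γ) ^ (ψ + 1) := by positivity
    rw [hd]
    field_simp
  have : 1 + (-1) * (-1 / ψ) * (s / lam ^ γ) ^ (ψ + 1) * (-ψ)
        * ((s + y ^ γ) / lam ^ γ) ^ (-ψ - 1)
      = 1 - ((s + y ^ γ) / lam ^ γ) ^ (-ψ - 1) * (s / lam ^ γ) ^ (ψ + 1) := by
    field_simp; ring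
  rw [this, key]
end

section
/- Let F₁(x) = 1 - (1 + (x/λ₁)^{γ₁})^{-κ₁} and F₂(x) = 1 - (1 + (x/λ₂)^{γ₂})^{-κ₂} be two three-parameter Burr c.d.f.s, and define φ_i(t) = λ_i^t κ_i B(κ_i - t/γ_i, 1 + t/γ_i) (the t-th moment transform) for t < κ_i γ_i. If κ₁ γ₁ < κ₂ γ₂, then lim_{t → (κ₁γ₁)⁻} φ₂(t)/φ₁(t) = 0. -/
open Filter Real Set

lemma gamma_continuousAt_of_pos {a : ℝ} (ha : 0 < a) : ContinuousAt Real.Gamma a := by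
  refine (Real.differentiableAt_Gamma fun m => ?_).continuousAt
  intro h
  have h0 : (0:ℝ) ≤ (m:ℝ) := Nat.cast_nonneg m
  rw [h] at ha
  linarith

lemma gamma_tendsto_atTop_zero :
    Tendsto Real.Gamma (nhdsWithin (0:ℝ) (Ioi 0)) atTop := by
  have h1 : Tendsto (fun s : ℝ => Real.Gamma (s + 1) * s⁻¹)
      (nhdsWithin (0:ℝ) (Ioi 0)) atTop := by
    refine Filter.Tendsto.pos_mul_atTop one_pos ?_ tendsto_inv_nhdsGT_zero
    have hadd : Tendsto (fun s : ℝ => s + 1) (nhds (0:ℝ)) (nhds (0 + 1)) :=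
      (tendsto_id.add tendsto_const_nhds)
    have hc : Tendsto (fun s : ℝ => Real.Gamma (s + 1)) (nhds (0:ℝ))
        (nhds (Real.Gamma (0 + 1))) :=
      (gamma_continuousAt_of_pos (by norm_num : (0:ℝ) < 0 + 1)).tendsto.comp hadd
    have : Real.Gamma ((0:ℝ) + 1) = 1 := by norm_num [Real.Gamma_one]
    rw [this] at hc
    exact hc.mono_left nhdsWithin_le_nhds
  refine h1.congr' ?_
  filter_upwards [self_mem_nhdsWithin] with s hs
  have hs0 : s ≠ 0 := ne_of_gt hs
  rw [Real.Gamma_add_one hs0]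
  field_simp

/-- Key ratio limit for identifiability of Burr mixtures: with moment
transforms `φ_i(t) = λ_i^t κ_i B(κ_i - t/γ_i, 1 + t/γ_i)` (where
`B(a,b) = Γ(a)Γ(b)/Γ(a+b)`), if `κ₁γ₁ < κ₂γ₂` then
`φ₂(t)/φ₁(t) → 0` as `t → (κ₁γ₁)⁻`. -/
theorem burr_moment_transform_ratio_limit
    (γ₁ γ₂ lam₁ lam₂ κ₁ κ₂ : ℝ)
    (hγ₁ : 0 < γ₁) (hγ₂ : 0 < γ₂) (hlam₁ : 0 < lam₁) (hlam₂ : 0 < lam₂)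
    (hκ₁ : 0 < κ₁) (hκ₂ : 0 < κ₂)
    (hlt : κ₁ * γ₁ < κ₂ * γ₂)
    (φ₁ φ₂ : ℝ → ℝ)
    (hφ₁ : ∀ t, φ₁ t = lam₁ ^ t * κ₁ *
        (Real.Gamma (κ₁ - t / γ₁) * Real.Gamma (1 + t / γ₁) /
          Real.Gamma ((κ₁ - t / γ₁) + (1 + t / γ₁))))
    (hφ₂ : ∀ t, φ₂ t = lam₂ ^ t * κ₂ *
        (Real.Gamma (κ₂ - t / γ₂) * Real.Gamma (1 + t / γ₂) /
          Real.Gamma ((κ₂ - t / γ₂) + (1 + t / γ₂)))) :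
    Tendsto (fun t => φ₂ t / φ₁ t)
      (nhdsWithin (κ₁ * γ₁) (Iio (κ₁ * γ₁))) (nhds 0) := by
  set t₀ : ℝ := κ₁ * γ₁ with ht₀
  set l := nhdsWithin t₀ (Iio t₀) with hl
  -- generic continuity facts at t₀
  have hid : Tendsto (fun t : ℝ => t) l (nhds t₀) :=
    tendsto_id.mono_left nhdsWithin_le_nhds
  have hdiv₁ : Tendsto (fun t : ℝ => t / γ₁) l (nhds κ₁) := by
    have := hid.div_const γ₁
    rwa [ht₀, mul_div_assoc, div_self (ne_of_gt hγ₁), mul_one] at this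
  have hdiv₂ : Tendsto (fun t : ℝ => t / γ₂) l (nhds (t₀ / γ₂)) := hid.div_const γ₂
  -- φ₁ tends to atTop
  have harg : Tendsto (fun t : ℝ => κ₁ - t / γ₁) l (nhdsWithin (0:ℝ) (Ioi 0)) := by
    rw [tendsto_nhdsWithin_iff]
    constructor
    · have := (tendsto_const_nhds (x := κ₁)).sub hdiv₁
      simpa using this
    · filter_upwards [self_mem_nhdsWithin] with t ht
      have : t / γ₁ < κ₁ := by
        rw [div_lt_iff₀ hγ₁]
        exact ht
      simpa [mem_Ioi] using sub_pos.mpr this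
  have hΓbig : Tendsto (fun t : ℝ => Real.Gamma (κ₁ - t / γ₁)) l atTop :=
    gamma_tendsto_atTop_zero.comp harg
  have hrpow₁ : Tendsto (fun t : ℝ => lam₁ ^ t) l (nhds (lam₁ ^ t₀)) :=
    ((continuousAt_const_rpow (ne_of_gt hlam₁)).tendsto.comp hid)
  have hΓ1 : Tendsto (fun t : ℝ => Real.Gamma (1 + t / γ₁)) l
      (nhds (Real.Gamma (1 + κ₁))) :=
    (gamma_continuousAt_of_pos (by linarith)).tendsto.comp
      (tendsto_const_nhds.add hdiv₁)
  have hC : Tendsto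
      (fun t : ℝ => lam₁ ^ t * κ₁ * Real.Gamma (1 + t / γ₁) / Real.Gamma (κ₁ + 1)) l
      (nhds (lam₁ ^ t₀ * κ₁ * Real.Gamma (1 + κ₁) / Real.Gamma (κ₁ + 1))) :=
    ((hrpow₁.mul tendsto_const_nhds).mul hΓ1).div_const _
  have hCpos : 0 < lam₁ ^ t₀ * κ₁ * Real.Gamma (1 + κ₁) / Real.Gamma (κ₁ + 1) := by
    have h1 : 0 < lam₁ ^ t₀ := Real.rpow_pos_of_pos hlam₁ _
    have h2 : 0 < Real.Gamma (1 + κ₁) := Real.Gamma_pos_of_pos (by linarith)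
    have h3 : 0 < Real.Gamma (κ₁ + 1) := Real.Gamma_pos_of_pos (by linarith)
    positivity
  have hφ₁top : Tendsto φ₁ l atTop := by
    have : Tendsto
        (fun t : ℝ => lam₁ ^ t * κ₁ * Real.Gamma (1 + t / γ₁) / Real.Gamma (κ₁ + 1) *
          Real.Gamma (κ₁ - t / γ₁)) l atTop :=
      Filter.Tendsto.pos_mul_atTop hCpos hC hΓbig
    refine this.congr fun t => ?_
    rw [hφ₁ t]
    have : (κ₁ - t / γ₁) + (1 + t / γ₁) = κ₁ + 1 := by ring
    rw [this]
    ring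
  -- φ₂ tends to a finite limit
  have ht₀lt : t₀ / γ₂ < κ₂ := by
    rw [div_lt_iff₀ hγ₂]
    exact hlt
  have hΓ2a : Tendsto (fun t : ℝ => Real.Gamma (κ₂ - t / γ₂)) l
      (nhds (Real.Gamma (κ₂ - t₀ / γ₂))) :=
    (gamma_continuousAt_of_pos (by linarith)).tendsto.comp
      (tendsto_const_nhds.sub hdiv₂)
  have ht₀nonneg : 0 ≤ t₀ / γ₂ := by positivity
  have hΓ2b : Tendsto (fun t : ℝ => Real.Gamma (1 + t / γ₂)) l
      (nhds (Real.Gamma (1 + t₀ / γ₂))) :=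
    (gamma_continuousAt_of_pos (by linarith)).tendsto.comp
      (tendsto_const_nhds.add hdiv₂)
  have hΓ2c : Tendsto (fun t : ℝ => Real.Gamma ((κ₂ - t / γ₂) + (1 + t / γ₂))) l
      (nhds (Real.Gamma ((κ₂ - t₀ / γ₂) + (1 + t₀ / γ₂)))) :=
    (gamma_continuousAt_of_pos (by linarith)).tendsto.comp
      ((tendsto_const_nhds.sub hdiv₂).add (tendsto_const_nhds.add hdiv₂))
  have hΓ2cne : Real.Gamma ((κ₂ - t₀ / γ₂) + (1 + t₀ / γ₂)) ≠ 0 :=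
    ne_of_gt (Real.Gamma_pos_of_pos (by linarith))
  have hrpow₂ : Tendsto (fun t : ℝ => lam₂ ^ t) l (nhds (lam₂ ^ t₀)) :=
    ((continuousAt_const_rpow (ne_of_gt hlam₂)).tendsto.comp hid)
  have hφ₂lim : Tendsto φ₂ l
      (nhds (lam₂ ^ t₀ * κ₂ *
        (Real.Gamma (κ₂ - t₀ / γ₂) * Real.Gamma (1 + t₀ / γ₂) /
          Real.Gamma ((κ₂ - t₀ / γ₂) + (1 + t₀ / γ₂))))) := by
    have : Tendsto (fun t => lam₂ ^ t * κ₂ *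
        (Real.Gamma (κ₂ - t / γ₂) * Real.Gamma (1 + t / γ₂) /
          Real.Gamma ((κ₂ - t / γ₂) + (1 + t / γ₂)))) l _ :=
      (hrpow₂.mul tendsto_const_nhds).mul ((hΓ2a.mul hΓ2b).div hΓ2c hΓ2cne)
    exact this.congr fun t => (hφ₂ t).symm
  -- conclude
  have hinv : Tendsto (fun t => (φ₁ t)⁻¹) l (nhds 0) := hφ₁top.inv_tendsto_atTop
  have := hφ₂lim.mul hinv
  rw [mul_zero] at this
  exact this.congr fun t => (div_eq_mul_inv _ _).symm
end
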